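/- Let N be a 1-net of the unit sphere S^{n-1}(1) in R^n, let 0 ≤ α < 1/2 and 0 < ε < 1/2 − α. If Ñ is a set such that for every v ∈ N there exists ṽ ∈ Ñ with ‖v − ṽ‖₂ ≤ ε, then the convex hull of Ñ contains the sphere S^{n-1}(α) of radius α (in fact the closed ball of radius α). -/
import Mathlib

open RealInnerProductSpace

set_option maxHeartbeats 1000000

theorem stmt0 {n : ℕ} (hn : 0 < n) (N Ntil : Set (EuclideanSpace ℝ (Fin n)))
    (hN : N ⊆ Metric.sphere 0 1)
    (hnet : ∀ z ∈ Metric.sphere (0 : EuclideanSpace ℝ (Fin n)) 1, ∃ v ∈ N, ‖v - z‖ ≤ 1)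
    (α ε : ℝ) (hα0 : 0 ≤ α) (hα : α < 1/2) (hε0 : 0 < ε) (hε : ε < 1/2 - α)
    (happrox : ∀ v ∈ N, ∃ w ∈ Ntil, ‖v - w‖ ≤ ε) :
    Metric.closedBall (0 : EuclideanSpace ℝ (Fin n)) α ⊆ convexHull ℝ Ntil := by
  set K := convexHull ℝ Ntil with hK
  set β : ℝ := 1/2 - ε with hβ
  have hαβ : α < β := by simp only [hβ]; linarith
  have hβ0 : 0 < β := by simp only [hβ]; linarith
  -- Step 1: key inner product bound
  have key : ∀ z : EuclideanSpace ℝ (Fin n), ‖z‖ = 1 → ∃ w ∈ Ntil, β ≤ ⟪z, w⟫ := by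
    intro z hz
    obtain ⟨v, hvN, hvz⟩ := hnet z (by simpa using hz)
    have hv1 : ‖v‖ = 1 := by simpa using hN hvN
    obtain ⟨w, hwNt, hvw⟩ := happrox v hvN
    refine ⟨w, hwNt, ?_⟩
    have h1 : (1:ℝ)/2 ≤ ⟪z, v⟫ := by
      have := norm_sub_sq_real v z
      have hsq : ‖v - z‖ ^ 2 ≤ 1 := by
        have := norm_nonneg (v - z)
        nlinarith
      have hzv : ⟪z, v⟫ = ⟪v, z⟫ := real_inner_comm v z
      nlinarith [this, hv1, hz]
    have h2 : ⟪z, v - w⟫ ≤ ε := by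
      calc ⟪z, v - w⟫ ≤ ‖z‖ * ‖v - w‖ := real_inner_le_norm z (v - w)
        _ ≤ 1 * ε := by
            apply mul_le_mul (le_of_eq hz) hvw (norm_nonneg _)
            norm_num
        _ = ε := one_mul ε
    have : ⟪z, w⟫ = ⟪z, v⟫ - ⟪z, v - w⟫ := by
      rw [inner_sub_right]; ring
    rw [this]; simp only [hβ]; linarith
  -- Ntil nonempty
  have hNt_ne : Ntil.Nonempty := by
    have hz : ‖(EuclideanSpace.single (⟨0, hn⟩ : Fin n) (1:ℝ) : EuclideanSpace ℝ (Fin n))‖ = 1 := by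
      simp [EuclideanSpace.norm_single]
    obtain ⟨w, hw, _⟩ := key _ hz
    exact ⟨w, hw⟩
  -- Step 2: closure of convex hull contains ball of radius β
  have hclos : ∀ x : EuclideanSpace ℝ (Fin n), ‖x‖ ≤ β → x ∈ closure K := by
    intro x hx
    by_contra hxK
    obtain ⟨f, u, hfu, hux⟩ :=
      geometric_hahn_banach_closed_point ((convex_convexHull ℝ Ntil).closure)
        isClosed_closure hxK
    by_cases hf : f = 0
    · obtain ⟨a, ha⟩ := hNt_ne
      have h1 : f a < u := hfu a (subset_closure (subset_convexHull ℝ Ntil ha))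
      rw [hf] at h1 hux
      simp at h1 hux
      linarith
    · set g : EuclideanSpace ℝ (Fin n) := (InnerProductSpace.toDual ℝ (EuclideanSpace ℝ (Fin n))).symm f with hg
      have hgf : ∀ y : EuclideanSpace ℝ (Fin n), ⟪g, y⟫ = f y := fun y => InnerProductSpace.toDual_symm_apply
      have hgnorm : ‖g‖ = ‖f‖ := by
        simp [hg]
      have hg0 : g ≠ 0 := by
        intro h
        apply hf
        have : ‖f‖ = 0 := by rw [← hgnorm, h, norm_zero]
        exact norm_eq_zero.mp this
      have hgn : (0:ℝ) < ‖g‖ := norm_pos_iff.mpr hg0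
      set z : EuclideanSpace ℝ (Fin n) := ‖g‖⁻¹ • g with hz
      have hz1 : ‖z‖ = 1 := by
        rw [hz, norm_smul, norm_inv, norm_norm, inv_mul_cancel₀ (ne_of_gt hgn)]
      obtain ⟨w, hwNt, hwb⟩ := key z hz1
      have hfw : ‖g‖ * β ≤ f w := by
        have : ⟪z, w⟫ = ‖g‖⁻¹ * f w := by
          rw [hz, real_inner_smul_left, hgf]
        rw [this] at hwb
        calc ‖g‖ * β ≤ ‖g‖ * (‖g‖⁻¹ * f w) := by
              exact mul_le_mul_of_nonneg_left hwb (le_of_lt hgn)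
          _ = f w := by field_simp
      have hfx : f x ≤ ‖g‖ * β := by
        calc f x ≤ ‖f‖ * ‖x‖ := le_trans (le_abs_self (f x)) (by simpa [Real.norm_eq_abs] using f.le_opNorm x)
          _ ≤ ‖f‖ * β := mul_le_mul_of_nonneg_left hx (norm_nonneg f)
          _ = ‖g‖ * β := by rw [hgnorm]
      have hw_lt : f w < u := hfu w (subset_closure (subset_convexHull ℝ Ntil hwNt))
      linarith
  -- Step 3: affine span is top, interior nonempty
  have hspan : affineSpan ℝ Ntil = ⊤ := by
    have hball : Metric.ball (0:EuclideanSpace ℝ (Fin n)) β ⊆ (affineSpan ℝ Ntil : Set (EuclideanSpace ℝ (Fin n))) := by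
      intro x hx
      have h1 : x ∈ closure K := hclos x (le_of_lt (by simpa using hx))
      have h2 : closure K ⊆ (affineSpan ℝ Ntil : Set (EuclideanSpace ℝ (Fin n))) := by
        have : K ⊆ (affineSpan ℝ Ntil : Set (EuclideanSpace ℝ (Fin n))) := convexHull_subset_affineSpan Ntil
        have hcl : IsClosed (affineSpan ℝ Ntil : Set (EuclideanSpace ℝ (Fin n))) :=
          (affineSpan ℝ Ntil).closed_of_finiteDimensional
        exact hcl.closure_subset_iff.mpr this
      exact h2 h1
    have := Metric.isOpen_ball.affineSpan_eq_top
      (u := Metric.ball (0:EuclideanSpace ℝ (Fin n)) β) ⟨0, by simpa using hβ0⟩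
    have hle := affineSpan_le.mpr hball
    rw [this] at hle
    exact top_le_iff.mp hle
  have hint : (interior K).Nonempty :=
    interior_convexHull_nonempty_iff_affineSpan_eq_top.mpr hspan
  obtain ⟨y, hy⟩ := hint
  -- Step 4: homothety argument
  intro x hx
  have hxα : ‖x‖ ≤ α := by simpa using hx
  set δ : ℝ := β - α with hδ
  have hδ0 : 0 < δ := by simp [hδ]; linarith
  set θ : ℝ := δ / (‖y‖ + α + δ + 1) with hθ
  have hden : (0:ℝ) < ‖y‖ + α + δ + 1 := by positivity
  have hθ0 : 0 < θ := div_pos hδ0 hden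
  have hθ1 : θ < 1 := by
    rw [hθ, div_lt_one hden]
    have := norm_nonneg y
    linarith
  set z : EuclideanSpace ℝ (Fin n) := (1 - θ)⁻¹ • (x - θ • y) with hzdef
  have h1θ : (0:ℝ) < 1 - θ := by linarith
  have hzβ : ‖z‖ ≤ β := by
    have hnum : ‖x - θ • y‖ ≤ α + θ * ‖y‖ := by
      calc ‖x - θ • y‖ ≤ ‖x‖ + ‖θ • y‖ := norm_sub_le _ _
        _ ≤ α + θ * ‖y‖ := by
            rw [norm_smul, Real.norm_eq_abs, abs_of_pos hθ0]
            linarith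
    have hkey : α + θ * ‖y‖ ≤ (1 - θ) * β := by
      have hθle : θ * (‖y‖ + α + δ) ≤ δ := by
        rw [hθ, div_mul_eq_mul_div, div_le_iff₀ hden]
        have hnn : 0 ≤ ‖y‖ + α + δ := by positivity
        nlinarith
      have : β = α + δ := by simp [hδ]
      nlinarith
    calc ‖z‖ = (1 - θ)⁻¹ * ‖x - θ • y‖ := by
          rw [hzdef, norm_smul, Real.norm_eq_abs, abs_of_pos (by positivity)]
      _ ≤ (1 - θ)⁻¹ * ((1 - θ) * β) := by
          apply mul_le_mul_of_nonneg_left _ (by positivity)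
          linarith
      _ = β := by field_simp
  have hzK : z ∈ closure K := hclos z hzβ
  have hcombo : (1 - θ) • z + θ • y ∈ interior K :=
    (convex_convexHull ℝ Ntil).combo_closure_interior_mem_interior hzK hy
      (le_of_lt h1θ) hθ0 (by ring)
  have heq : (1 - θ) • z + θ • y = x := by
    rw [hzdef, smul_smul, mul_inv_cancel₀ (ne_of_gt h1θ), one_smul]
    abel
  rw [heq] at hcombo
  exact interior_subset hcombo
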